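/- With the weighted-graph and unit potential flow setup below, define the catalyst w = (1/(R_s √d_s)) Σ_{x ∈ V, x ≠ s} v_x √(d_x) |φ_x⟩ in the edge space. Then (I − Π₊)(|φ_s⟩ + w) = (1/√(2 R_s d_s)) |f⟩. -/

import Mathlib

open scoped InnerProductSpace BigOperators

namespace Elfs

variable {V : Type*} [Fintype V] [DecidableEq V]

/-- The degree of a vertex: `d_x = Σ_y w_{xy}`. -/
noncomputable def deg (w : V → V → ℝ) (x : V) : ℝ := ∑ y, w x y

/-- The basis state `|xy⟩` of the edge space. -/
noncomputable def ket (p : V × V) : EuclideanSpace ℂ (V × V) :=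
  EuclideanSpace.single p 1

/-- The star state `|φ_x⟩ = (1/√d_x) Σ_y √(w_{xy}) |xy⟩`. -/
noncomputable def starState (w : V → V → ℝ) (x : V) : EuclideanSpace ℂ (V × V) :=
  ((Real.sqrt (deg w x) : ℂ))⁻¹ • ∑ y, ((Real.sqrt (w x y) : ℝ) : ℂ) • ket (x, y)

/-- The electric flow state `|f⟩ = (1/√(2 R_s)) Σ_{(x,y)} (f_{xy}/√(w_{xy})) |xy⟩`
for the potential flow `f_{xy} = w_{xy}(v_x − v_y)` (terms with `w_{xy} = 0` contribute `0`,
matching the restriction of the sum to edges of positive weight). -/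
noncomputable def flowState (w : V → V → ℝ) (v : V → ℝ) (s : V) :
    EuclideanSpace ℂ (V × V) :=
  ((Real.sqrt (2 * v s) : ℂ))⁻¹ •
    ∑ p : V × V, ((w p.1 p.2 * (v p.1 - v p.2) / Real.sqrt (w p.1 p.2) : ℝ) : ℂ) • ket p

/-- The symmetric subspace `span{|xy⟩ + |yx⟩ : (x,y) ∈ E}`. -/
noncomputable def symSpan (E : Set (V × V)) : Submodule ℂ (EuclideanSpace ℂ (V × V)) :=
  Submodule.span ℂ {u | ∃ p ∈ E, u = ket p + ket p.swap}

/-- `Π₊`, the orthogonal projection onto the symmetric subspace. -/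
noncomputable def projSym (E : Set (V × V)) :
    EuclideanSpace ℂ (V × V) →ₗ[ℂ] EuclideanSpace ℂ (V × V) :=
  (symSpan E).subtype ∘ₗ ((symSpan E).orthogonalProjectionOnto).toLinearMap

end Elfs

namespace Elfs

/-- The catalyst `w = (1/(R_s √d_s)) Σ_{x ≠ s} v_x √(d_x) |φ_x⟩`. -/
noncomputable def catalyst {V : Type*} [Fintype V] [DecidableEq V]
    (w : V → V → ℝ) (v : V → ℝ) (s : V) : EuclideanSpace ℂ (V × V) :=
  (((v s * Real.sqrt (deg w s) : ℝ) : ℂ))⁻¹ •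
    ∑ x ∈ Finset.univ \ {s}, (((v x * Real.sqrt (deg w x) : ℝ)) : ℂ) • starState w x

end Elfs


namespace Elfs
variable {V : Type*} [Fintype V] [DecidableEq V]

noncomputable def cf (w : V → V → ℝ) (v : V → ℝ) (s : V) (p : V × V) : ℝ :=
  (v s * Real.sqrt (deg w s))⁻¹ * (v p.1 * Real.sqrt (w p.1 p.2))

lemma euc_sum_apply {ι J : Type*} (s : Finset ι) (f : ι → EuclideanSpace ℂ J) (q : J) :
    (∑ i ∈ s, f i) q = ∑ i ∈ s, f i q := by
  induction s using Finset.cons_induction with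
  | empty => simp [PiLp.zero_apply]
  | cons a s ha ih => simp [Finset.sum_cons, PiLp.add_apply, ih]

lemma sum_ket_apply (g : V × V → ℂ) (q : V × V) :
    (∑ p : V × V, g p • ket p) q = g q := by
  simp [euc_sum_apply, ket, PiLp.smul_apply, EuclideanSpace.single_apply,
    Finset.sum_ite_eq]

lemma star_apply (w : V → V → ℝ) (x : V) (q : V × V) :
    starState w x q = ((Real.sqrt (deg w x))⁻¹ : ℂ) *
      (if q.1 = x then ((Real.sqrt (w x q.2) : ℝ) : ℂ) else 0) := by
  obtain ⟨a, b⟩ := q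
  simp only [starState, PiLp.smul_apply, euc_sum_apply, PiLp.smul_apply, ket,
    EuclideanSpace.single_apply, smul_eq_mul, mul_ite, mul_one, mul_zero, Prod.mk.injEq]
  by_cases h : a = x
  · subst h
    simp
  · simp [h]

lemma psi_apply (w : V → V → ℝ) (v : V → ℝ) (s : V)
    (hdeg : ∀ x, 0 < deg w x) (hRpos : 0 < v s) (q : V × V) :
    (starState w s + catalyst w v s) q = ((cf w v s q : ℝ) : ℂ) := by
  have hds : Real.sqrt (deg w s) ≠ 0 := Real.sqrt_ne_zero'.mpr (hdeg s)
  have hdq : Real.sqrt (deg w q.1) ≠ 0 := Real.sqrt_ne_zero'.mpr (hdeg q.1)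
  have hvs : v s ≠ 0 := ne_of_gt hRpos
  have hds' : ((Real.sqrt (deg w s) : ℝ) : ℂ) ≠ 0 := by exact_mod_cast hds
  have hdq' : ((Real.sqrt (deg w q.1) : ℝ) : ℂ) ≠ 0 := by exact_mod_cast hdq
  have hvs' : ((v s : ℝ) : ℂ) ≠ 0 := by exact_mod_cast hvs
  rw [PiLp.add_apply]
  simp only [catalyst, PiLp.smul_apply, euc_sum_apply, smul_eq_mul, star_apply,
    mul_ite, mul_zero, Finset.sum_ite_eq, Finset.mem_sdiff, Finset.mem_univ,
    Finset.mem_singleton, true_and, cf]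
  by_cases h : q.1 = s
  · simp only [h, if_pos rfl, if_neg (by simp : ¬¬(s = s)), not_true_eq_false, ↓reduceIte, mul_zero, add_zero]
    push_cast
    field_simp
  · simp only [if_neg h, if_pos h, zero_add]
    push_cast
    field_simp

noncomputable def aVec (w : V → V → ℝ) (v : V → ℝ) (s : V) : EuclideanSpace ℂ (V × V) :=
  ∑ p : V × V, (((cf w v s p + cf w v s p.swap) / 2 : ℝ) : ℂ) • ket p

noncomputable def bVec (w : V → V → ℝ) (v : V → ℝ) (s : V) : EuclideanSpace ℂ (V × V) :=
  ∑ p : V × V, (((cf w v s p - cf w v s p.swap) / 2 : ℝ) : ℂ) • ket p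

lemma bVec_apply (w : V → V → ℝ) (v : V → ℝ) (s : V) (q : V × V) :
    bVec w v s q = (((cf w v s q - cf w v s q.swap) / 2 : ℝ) : ℂ) :=
  sum_ket_apply _ q

lemma aVec_apply (w : V → V → ℝ) (v : V → ℝ) (s : V) (q : V × V) :
    aVec w v s q = (((cf w v s q + cf w v s q.swap) / 2 : ℝ) : ℂ) :=
  sum_ket_apply _ q

lemma sum_swap_ket (g : V × V → ℂ) :
    ∑ p : V × V, g p • ket p.swap = ∑ p : V × V, g p.swap • ket p :=
  Fintype.sum_equiv (Equiv.prodComm V V) _ _ (fun p => by simp [Equiv.prodComm])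

lemma aVec_decomp (w : V → V → ℝ) (v : V → ℝ) (s : V) :
    aVec w v s = ∑ p : V × V, ((cf w v s p / 2 : ℝ) : ℂ) • (ket p + ket p.swap) := by
  simp_rw [smul_add]
  rw [Finset.sum_add_distrib, sum_swap_ket, ← Finset.sum_add_distrib]
  simp_rw [← add_smul]
  refine Finset.sum_congr rfl fun p _ => ?_
  congr 1
  push_cast
  ring

lemma aVec_mem (E : Set (V × V)) (w : V → V → ℝ) (v : V → ℝ) (s : V)
    (hwE : ∀ x y, (x, y) ∉ E → w x y = 0) :
    aVec w v s ∈ symSpan E := by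
  rw [aVec_decomp]
  refine Submodule.sum_mem _ fun p _ => ?_
  by_cases hw : w p.1 p.2 = 0
  · have h0 : cf w v s p = 0 := by simp [cf, hw]
    simp [h0]
  · have hp : p ∈ E := by
      by_contra h
      exact hw (hwE p.1 p.2 (by simpa using h))
    exact Submodule.smul_mem _ _ (Submodule.subset_span ⟨p, hp, rfl⟩)

lemma bVec_mem (E : Set (V × V)) (w : V → V → ℝ) (v : V → ℝ) (s : V) :
    bVec w v s ∈ (symSpan E)ᗮ := by
  rw [Submodule.mem_orthogonal]
  intro u hu
  induction hu using Submodule.span_induction with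
  | mem u hu =>
    obtain ⟨p, _, rfl⟩ := hu
    rw [inner_add_left]
    simp only [ket, EuclideanSpace.inner_single_left, map_one, one_mul]
    rw [show ∀ q, (bVec w v s : EuclideanSpace ℂ (V × V)) q
        = (((cf w v s q - cf w v s q.swap) / 2 : ℝ) : ℂ) from bVec_apply w v s,
      bVec_apply, Prod.swap_swap]
    push_cast
    ring
  | zero => exact inner_zero_left _
  | add x y hx hy ihx ihy => rw [inner_add_left, ihx, ihy, add_zero]
  | smul a x hx ihx => rw [inner_smul_left, ihx, mul_zero]

lemma psi_decomp (w : V → V → ℝ) (v : V → ℝ) (s : V)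
    (hdeg : ∀ x, 0 < deg w x) (hRpos : 0 < v s) :
    starState w s + catalyst w v s = aVec w v s + bVec w v s := by
  ext q
  rw [show (aVec w v s + bVec w v s) q = aVec w v s q + bVec w v s q from rfl,
    psi_apply w v s hdeg hRpos q, aVec_apply, bVec_apply]
  push_cast
  ring

lemma scalar_key (w : V → V → ℝ) (v : V → ℝ) (s : V)
    (hwsymm : ∀ x y, w x y = w y x)
    (hdeg : ∀ x, 0 < deg w x) (hRpos : 0 < v s) (q : V × V) :
    (cf w v s q - cf w v s q.swap) / 2 =
      (Real.sqrt (2 * v s * deg w s))⁻¹ *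
        ((Real.sqrt (2 * v s))⁻¹ *
          (w q.1 q.2 * (v q.1 - v q.2) / Real.sqrt (w q.1 q.2))) := by
  have hvs : v s ≠ 0 := ne_of_gt hRpos
  have hds : (0:ℝ) < Real.sqrt (deg w s) := Real.sqrt_pos.mpr (hdeg s)
  have hds' : Real.sqrt (deg w s) ≠ 0 := ne_of_gt hds
  have key : Real.sqrt (2 * v s * deg w s) * Real.sqrt (2 * v s)
      = 2 * v s * Real.sqrt (deg w s) := by
    rw [← Real.sqrt_mul (by nlinarith [hdeg s] : (0:ℝ) ≤ 2 * v s * deg w s),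
      show 2 * v s * deg w s * (2 * v s) = (2 * v s) ^ 2 * deg w s by ring,
      Real.sqrt_mul (by positivity), Real.sqrt_sq (by positivity)]
  rw [show w q.1 q.2 * (v q.1 - v q.2) / Real.sqrt (w q.1 q.2)
      = (v q.1 - v q.2) * (w q.1 q.2 / Real.sqrt (w q.1 q.2)) by ring,
    Real.div_sqrt, ← mul_assoc, ← mul_inv, key]
  simp only [cf]
  rw [show q.swap.1 = q.2 from rfl, show q.swap.2 = q.1 from rfl, hwsymm q.2 q.1]
  field_simp

end Elfs

open Elfs

/-- `(I − Π₊)(|φ_s⟩ + w) = (1/√(2 R_s d_s)) |f⟩`. -/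
theorem stmt7 {V : Type*} [Fintype V] [DecidableEq V]
    (E : Set (V × V)) (w : V → V → ℝ) (s : V) (M : Finset V)
    (hE : ∀ p : V × V, p ∈ E ↔ p.swap ∈ E)
    (hw0 : ∀ x y, 0 ≤ w x y) (hwsymm : ∀ x y, w x y = w y x)
    (hwE : ∀ x y, (x, y) ∉ E → w x y = 0)
    (hdeg : ∀ x, 0 < deg w x)
    (hM : M.Nonempty) (hsM : s ∉ M)
    (v : V → ℝ) (hvM : ∀ y ∈ M, v y = 0) (hRpos : 0 < v s)
    (hunit : ∑ y, w s y * (v s - v y) = 1)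
    (hcons : ∀ x, x ≠ s → x ∉ M → ∑ y, w x y * (v x - v y) = 0) :
    starState w s + catalyst w v s - projSym E (starState w s + catalyst w v s) =
      (((Real.sqrt (2 * v s * deg w s))⁻¹ : ℝ) : ℂ) • flowState w v s := by
  have hψ := psi_decomp w v s hdeg hRpos
  have h1 : projSym E (starState w s + catalyst w v s) = aVec w v s := by
    rw [hψ, map_add]
    have ha : (((symSpan E).orthogonalProjectionOnto (aVec w v s) : _)
        : EuclideanSpace ℂ (V × V)) = aVec w v s :=
      Submodule.starProjection_eq_self_iff.mpr (aVec_mem E w v s hwE)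
    have hb : (symSpan E).orthogonalProjectionOnto (bVec w v s) = 0 :=
      Submodule.orthogonalProjectionOnto_apply_of_mem_orthogonal (bVec_mem E w v s)
    simp [projSym, ha, hb]
  rw [hψ] at h1 ⊢
  rw [h1, add_sub_cancel_left]
  ext q
  rw [bVec_apply]
  simp only [flowState, PiLp.smul_apply, sum_ket_apply, smul_eq_mul]
  rw [scalar_key w v s hwsymm hdeg hRpos q]
  push_cast
  ring
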